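/- Fix β ∈ ℝ, t > 0, s' ∈ (0,t], a bounded measurable curve P : [0,s'] → ℝ³, a vector n ∈ ℝ³, and a number c < 0. Consider the problem of minimizing J(ω) = ½ ∫₀^{s'} e^{β(t−σ)} |ω(σ)|² dσ over ω ∈ L²([0,s'];ℝ³) subject to the linear constraint ⟨ n , ∫₀^{s'} ω(σ) × (P(s') − P(σ)) dσ ⟩ + c = 0. Assume the quantity I := ∫₀^{s'} e^{−β(t−σ)} ( |n|² |P(s') − P(σ)|² − ⟨ n , P(s') − P(σ) ⟩² ) dσ is strictly positive. Then the problem admits a unique minimizer, given by ω(σ) = λ e^{−β(t−σ)} n × (P(s') − P(σ)) with λ = c / I, and λ ≤ 0. -/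

import Mathlib

open MeasureTheory Set Classical
noncomputable section

/-- Three-dimensional Euclidean space. -/
abbrev E3 : Type := EuclideanSpace ℝ (Fin 3)

/-- The cross product on `ℝ³`. -/
def cross (u v : E3) : E3 :=
  WithLp.toLp 2 ![u 1 * v 2 - u 2 * v 1, u 2 * v 0 - u 0 * v 2, u 0 * v 1 - u 1 * v 0]

/-- The Euclidean inner product on `ℝ³`. -/
def rinner (u v : E3) : ℝ := inner ℝ u v

/-- The signed distance to the boundary of `Ω`: negative inside `Ω`, positive outside. -/
def signedDistFn (Ω : Set E3) (x : E3) : ℝ :=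
  if x ∈ Ω then -(Metric.infDist x (frontier Ω)) else Metric.infDist x (frontier Ω)

/-- The (unit) outer normal to `Ω`, i.e. the gradient of the signed distance. -/
def outerNormal (Ω : Set E3) (x : E3) : E3 := gradient (signedDistFn Ω) x

/-- The set `Ω` has boundary of class `C^k`: near every boundary point, `Ω` is the sublevel
set of a `C^k` defining function with nonvanishing gradient. -/
def HasCkBoundary (Ω : Set E3) (k : ℕ∞) : Prop :=
  ∀ x ∈ frontier Ω, ∃ (U : Set E3) (f : E3 → ℝ), IsOpen U ∧ x ∈ U ∧
    ContDiffOn ℝ k f U ∧ (∀ y ∈ U, gradient f y ≠ 0) ∧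
    Ω ∩ U = {y ∈ U | f y < 0} ∧ frontier Ω ∩ U = {y ∈ U | f y = 0}

/-- `γ`, together with its derivative `γd` and second derivative `γdd`, is a curve of Sobolev
class `H²` on `[0,T]`: `γ` and `γd` are absolutely continuous with the stated derivatives,
and `γdd` is square integrable. -/
def IsH2Curve (T : ℝ) (γ γd γdd : ℝ → E3) : Prop :=
  (∀ s ∈ Icc (0:ℝ) T, γ s = γ 0 + ∫ σ in (0:ℝ)..s, γd σ) ∧
  (∀ s ∈ Icc (0:ℝ) T, γd s = γd 0 + ∫ σ in (0:ℝ)..s, γdd σ) ∧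
  MemLp γdd 2 (volume.restrict (Icc (0:ℝ) T))

/-- The `L²` norm of `ω` on `[0,T]`. -/
def L2norm (T : ℝ) (ω : ℝ → E3) : ℝ := Real.sqrt (∫ s in (0:ℝ)..T, ‖ω s‖ ^ 2)

/-- The `H²` norm of a curve on `[0,T]` (given together with its two derivatives). -/
def H2norm (T : ℝ) (v vd vdd : ℝ → E3) : ℝ :=
  Real.sqrt ((∫ s in (0:ℝ)..T, ‖v s‖ ^ 2) + (∫ s in (0:ℝ)..T, ‖vd s‖ ^ 2) +
    (∫ s in (0:ℝ)..T, ‖vdd s‖ ^ 2))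

/-- Membership in the tube `V_ρ` around the (extended) initial curve `γ₀`:
`γ(0) = 0`, `γ'(0) = γ₀'(0)`, `|γ'| ≡ 1` on `[0,T]`, and `∫₀^T |γ'' − γ₀''|² ≤ ρ`. -/
def InTube (T ρ : ℝ) (γ₀d0 : E3) (γ₀dd : ℝ → E3) (γ γd γdd : ℝ → E3) : Prop :=
  IsH2Curve T γ γd γdd ∧ γ 0 = 0 ∧ γd 0 = γ₀d0 ∧
  (∀ s ∈ Icc (0:ℝ) T, ‖γd s‖ = 1) ∧
  (∫ s in (0:ℝ)..T, ‖γdd s - γ₀dd s‖ ^ 2) ≤ ρ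

/-- The second derivative of the curve `γ₀` extended linearly beyond `t₀`. -/
def extendSecond (t₀ : ℝ) (γ₀dd : ℝ → E3) : ℝ → E3 :=
  fun s => if s ≤ t₀ then γ₀dd s else 0

/-- The rotated curve `γ_ω(s) = γ(s) + ∫₀^s ω(σ) × (γ(s) − γ(σ)) dσ`. -/
def rotCurve (γ ω : ℝ → E3) (s : ℝ) : E3 :=
  γ s + ∫ σ in (0:ℝ)..s, cross (ω σ) (γ s - γ σ)

/-- The elastic cost `J(ω) = ∫₀^T e^{β(t−s)} |ω(s)|² ds`. -/
def Jcost (β t T : ℝ) (ω : ℝ → E3) : ℝ :=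
  ∫ s in (0:ℝ)..T, Real.exp (β * (t - s)) * ‖ω s‖ ^ 2

/-- The maximal depth `E(t,γ,Ω)` at which `γ|_{[0,t]}` penetrates inside `Ω` (zero if it
does not enter `Ω`). -/
def penDepth (t : ℝ) (γ : ℝ → E3) (Ω : Set E3) : ℝ :=
  sSup (insert 0 {d | ∃ s ∈ Icc (0:ℝ) t, γ s ∈ Ω ∧ d = Metric.infDist (γ s) (frontier Ω)})

/-- The breakdown configuration (B): the tip touches the obstacle perpendicularly, and the
curve is straight (a.e.) wherever it does not touch the boundary. -/
def Breakdown (Ω : Set E3) (t₀ : ℝ) (γ γd γdd : ℝ → E3) : Prop :=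
  γ t₀ ∈ frontier Ω ∧ γd t₀ = - outerNormal Ω (γ t₀) ∧
  (∀ᵐ s : ℝ, s ∈ Ioo (0:ℝ) t₀ → γ s ∉ frontier Ω → γdd s = 0)

/-- The linear map `v ↦ w × v`. -/
def crossLM (w : E3) : E3 →ₗ[ℝ] E3 where
  toFun v := cross w v
  map_add' a b := by
    ext i
    fin_cases i <;> simp [cross, PiLp.add_apply] <;> ring
  map_smul' c a := by
    ext i
    fin_cases i <;> simp [cross, PiLp.smul_apply, smul_eq_mul] <;> ring

/-- The continuous linear map `A(w) : v ↦ w × v`. -/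
def crossCLM (w : E3) : E3 →L[ℝ] E3 := LinearMap.toContinuousLinearMap (crossLM w)

/-- The rotation `R[w] = exp(A(w))`, where `A(w)v = w × v`. -/
def rotOf (w : E3) : E3 →L[ℝ] E3 := NormedSpace.exp (crossCLM w)

/-! ### Auxiliary lemmas for the single-point minimizer -/

lemma SPM.rinner_expand (u v : E3) : rinner u v = u 0 * v 0 + u 1 * v 1 + u 2 * v 2 := by
  simp [rinner, PiLp.inner_apply, Fin.sum_univ_three, RCLike.inner_apply, mul_comm]

lemma SPM.rinner_self (u : E3) : ‖u‖ ^ 2 = rinner u u := (real_inner_self_eq_norm_sq u).symm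

lemma SPM.rinner_smul_right (u w : E3) (a b : ℝ) :
    rinner u (a • (b • w)) = a * b * rinner u w := by
  show @inner ℝ _ _ u (a • (b • w)) = _
  rw [real_inner_smul_right, real_inner_smul_right, ← rinner]; ring

lemma SPM.rinner_smul_left (w u : E3) (a b : ℝ) :
    rinner (a • (b • w)) u = a * b * rinner w u := by
  show @inner ℝ _ _ (a • (b • w)) u = _
  rw [real_inner_smul_left, real_inner_smul_left, ← rinner]; ring

lemma SPM.rinner_cross_left (n w v : E3) : rinner n (cross w v) = - rinner w (cross n v) := by
  simp only [SPM.rinner_expand, cross]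
  simp [Matrix.cons_val_zero, Matrix.cons_val_one]; ring

lemma SPM.normsq_cross (n v : E3) : ‖cross n v‖ ^ 2 = ‖n‖ ^ 2 * ‖v‖ ^ 2 - (rinner n v) ^ 2 := by
  simp only [SPM.rinner_self, SPM.rinner_expand, cross]
  simp [Matrix.cons_val_zero, Matrix.cons_val_one]; ring

lemma SPM.norm_cross_le (u v : E3) : ‖cross u v‖ ≤ ‖u‖ * ‖v‖ := by
  have h : ‖cross u v‖ ^ 2 ≤ (‖u‖ * ‖v‖) ^ 2 := by
    rw [SPM.normsq_cross]
    have h2 : (rinner u v) ^ 2 ≥ 0 := sq_nonneg _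
    nlinarith
  exact le_of_sq_le_sq h (by positivity)

lemma SPM.cont_cross : Continuous (fun p : E3 × E3 => cross p.1 p.2) := by
  have c1 : ∀ j : Fin 3, Continuous fun p : E3 × E3 => p.1 j :=
    fun j => (EuclideanSpace.proj j : E3 →L[ℝ] ℝ).continuous.comp continuous_fst
  have c2 : ∀ j : Fin 3, Continuous fun p : E3 × E3 => p.2 j :=
    fun j => (EuclideanSpace.proj j : E3 →L[ℝ] ℝ).continuous.comp continuous_snd
  have h1 : Continuous fun p : E3 × E3 => (![p.1 1 * p.2 2 - p.1 2 * p.2 1,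
      p.1 2 * p.2 0 - p.1 0 * p.2 2, p.1 0 * p.2 1 - p.1 1 * p.2 0] : Fin 3 → ℝ) := by
    apply continuous_pi; intro i
    fin_cases i <;> simp <;>
      exact Continuous.sub ((c1 _).mul (c2 _)) ((c1 _).mul (c2 _))
  exact (PiLp.continuous_toLp 2 _).comp h1

lemma SPM.intervalToMeasure {X : Type*} [NormedAddCommGroup X] [NormedSpace ℝ X]
    {a b : ℝ} (h : a ≤ b) (f : ℝ → X) :
    ∫ σ in a..b, f σ = ∫ σ, f σ ∂(volume.restrict (Icc a b)) := by
  rw [intervalIntegral.integral_of_le h,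
    Measure.restrict_congr_set (Ioc_ae_eq_Icc (μ := volume) (a := a) (b := b))]

set_option maxHeartbeats 2000000

/-- explicit solution of the single-point elastic minimization problem: the unique
minimizer of `½∫ e^{β(t−σ)}|ω|²` under the linearized non-penetration constraint is
`ω(σ) = λ e^{−β(t−σ)} n × (P(s') − P(σ))` with `λ = c / I ≤ 0`. -/
theorem single_point_pushout_minimizer
    (β t s' : ℝ) (ht : 0 < t) (hs' : s' ∈ Ioc (0:ℝ) t)
    (P : ℝ → E3) (hPm : Measurable P) (hPb : ∃ C : ℝ, ∀ σ ∈ Icc (0:ℝ) s', ‖P σ‖ ≤ C)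
    (n : E3) (c : ℝ) (hc : c < 0)
    (I : ℝ)
    (hI : I = ∫ σ in (0:ℝ)..s', Real.exp (-(β * (t - σ))) *
        (‖n‖ ^ 2 * ‖P s' - P σ‖ ^ 2 - (rinner n (P s' - P σ)) ^ 2))
    (hIpos : 0 < I) :
    ∃ wbar : ℝ → E3,
      (∀ σ : ℝ, wbar σ = (c / I) • (Real.exp (-(β * (t - σ))) • cross n (P s' - P σ))) ∧
      c / I ≤ 0 ∧
      MemLp wbar 2 (volume.restrict (Icc (0:ℝ) s')) ∧
      rinner n (∫ σ in (0:ℝ)..s', cross (wbar σ) (P s' - P σ)) + c = 0 ∧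
      (∀ ω : ℝ → E3, MemLp ω 2 (volume.restrict (Icc (0:ℝ) s')) →
        rinner n (∫ σ in (0:ℝ)..s', cross (ω σ) (P s' - P σ)) + c = 0 →
        (1/2) * (∫ σ in (0:ℝ)..s', Real.exp (β * (t - σ)) * ‖wbar σ‖ ^ 2) ≤
          (1/2) * (∫ σ in (0:ℝ)..s', Real.exp (β * (t - σ)) * ‖ω σ‖ ^ 2)) ∧
      (∀ ω : ℝ → E3, MemLp ω 2 (volume.restrict (Icc (0:ℝ) s')) →
        rinner n (∫ σ in (0:ℝ)..s', cross (ω σ) (P s' - P σ)) + c = 0 →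
        (∫ σ in (0:ℝ)..s', Real.exp (β * (t - σ)) * ‖ω σ‖ ^ 2) =
          (∫ σ in (0:ℝ)..s', Real.exp (β * (t - σ)) * ‖wbar σ‖ ^ 2) →
        ω =ᵐ[volume.restrict (Icc (0:ℝ) s')] wbar) := by
  classical
  obtain ⟨hs'0, hs't⟩ := hs'
  obtain ⟨C, hC⟩ := hPb
  have hC0 : 0 ≤ C := (norm_nonneg _).trans (hC 0 ⟨le_rfl, hs'0.le⟩)
  set μ : Measure ℝ := volume.restrict (Icc (0:ℝ) s') with hμdef
  set l : ℝ := c / I with hl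
  set en : ℝ → ℝ := fun σ => Real.exp (-(β * (t - σ))) with hen
  set Ex : ℝ → ℝ := fun σ => Real.exp (β * (t - σ)) with hEx
  set g : ℝ → E3 := fun σ => cross n (P s' - P σ) with hgdef
  set wbar : ℝ → E3 := fun σ => l • (en σ • g σ) with hwdef
  set M : ℝ := Real.exp (|β| * t) with hM
  -- basic bounds
  have hMpos : 0 < M := Real.exp_pos _
  have hExle : ∀ σ ∈ Icc (0:ℝ) s', Ex σ ≤ M := by
    intro σ hσ
    refine Real.exp_le_exp.mpr ?_
    have h1 : β * (t - σ) ≤ |β| * |t - σ| := by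
      rw [← abs_mul]; exact le_abs_self _
    have h2 : |t - σ| ≤ t := by
      rw [abs_of_nonneg (by linarith [hσ.2] : (0:ℝ) ≤ t - σ)]; linarith [hσ.1]
    calc β * (t - σ) ≤ |β| * |t - σ| := h1
      _ ≤ |β| * t := by
          exact mul_le_mul_of_nonneg_left h2 (abs_nonneg β)
  have henle : ∀ σ ∈ Icc (0:ℝ) s', en σ ≤ M := by
    intro σ hσ
    refine Real.exp_le_exp.mpr ?_
    have h1 : -(β * (t - σ)) ≤ |β| * |t - σ| := by
      rw [← abs_mul]; exact neg_le_abs _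
    have h2 : |t - σ| ≤ t := by
      rw [abs_of_nonneg (by linarith [hσ.2] : (0:ℝ) ≤ t - σ)]; linarith [hσ.1]
    calc -(β * (t - σ)) ≤ |β| * |t - σ| := h1
      _ ≤ |β| * t := mul_le_mul_of_nonneg_left h2 (abs_nonneg β)
  have hExpos : ∀ σ : ℝ, 0 < Ex σ := fun σ => Real.exp_pos _
  have henpos : ∀ σ : ℝ, 0 < en σ := fun σ => Real.exp_pos _
  have hExen : ∀ σ : ℝ, Ex σ * en σ = 1 := by
    intro σ; rw [hEx, hen]; rw [← Real.exp_add]; simp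
  -- bounds on v and g
  have hvb : ∀ σ ∈ Icc (0:ℝ) s', ‖P s' - P σ‖ ≤ C + C := by
    intro σ hσ
    calc ‖P s' - P σ‖ ≤ ‖P s'‖ + ‖P σ‖ := norm_sub_le _ _
      _ ≤ C + C := add_le_add (hC s' ⟨hs'0.le, le_rfl⟩) (hC σ hσ)
  have hgb : ∀ σ ∈ Icc (0:ℝ) s', ‖g σ‖ ≤ ‖n‖ * (C + C) := by
    intro σ hσ
    calc ‖g σ‖ ≤ ‖n‖ * ‖P s' - P σ‖ := SPM.norm_cross_le _ _
      _ ≤ ‖n‖ * (C + C) := mul_le_mul_of_nonneg_left (hvb σ hσ) (norm_nonneg n)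
  have hwb : ∀ σ ∈ Icc (0:ℝ) s', ‖wbar σ‖ ≤ |l| * (M * (‖n‖ * (C + C))) := by
    intro σ hσ
    have : ‖wbar σ‖ = |l| * (en σ * ‖g σ‖) := by
      rw [hwdef]; simp [norm_smul, abs_of_pos (henpos σ), Real.norm_eq_abs]
    rw [this]
    refine mul_le_mul_of_nonneg_left ?_ (abs_nonneg l)
    exact mul_le_mul (henle σ hσ) (hgb σ hσ) (norm_nonneg _) hMpos.le
  -- measurability
  have hv_meas : Measurable (fun σ => P s' - P σ) := measurable_const.sub hPm
  have hg_meas : Measurable g := by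
    have : Continuous (fun x : E3 => cross n x) :=
      SPM.cont_cross.comp (continuous_const.prodMk continuous_id)
    exact this.measurable.comp hv_meas
  have hen_meas : Measurable en := by fun_prop
  have hEx_meas : Measurable Ex := by fun_prop
  have hw_meas : Measurable wbar := ((hen_meas.smul hg_meas).const_smul l)
  have hIne : I ≠ 0 := ne_of_gt hIpos
  have hlI : l * I = c := div_mul_cancel₀ c hIne
  have hl0 : l ≤ 0 := div_nonpos_of_nonpos_of_nonneg hc.le hIpos.le
  -- MemLp of wbar
  have hwmem : MemLp wbar 2 μ := by
    refine MemLp.of_bound hw_meas.aestronglyMeasurable (|l| * (M * (‖n‖ * (C + C)))) ?_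
    rw [hμdef]
    filter_upwards [ae_restrict_mem measurableSet_Icc] with σ hσ
    exact hwb σ hσ
  -- interval integral to measure integral
  have hII : ∀ (f : ℝ → ℝ), ∫ σ in (0:ℝ)..s', f σ = ∫ σ, f σ ∂μ := by
    intro f; rw [hμdef]; exact SPM.intervalToMeasure hs'0.le f
  have hIIE : ∀ (f : ℝ → E3), ∫ σ in (0:ℝ)..s', f σ = ∫ σ, f σ ∂μ := by
    intro f; rw [hμdef]; exact SPM.intervalToMeasure hs'0.le f
  have hIμ : ∫ σ, en σ * (‖n‖ ^ 2 * ‖P s' - P σ‖ ^ 2 - (rinner n (P s' - P σ)) ^ 2) ∂μ = I := by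
    rw [hI]; exact (hII _).symm
  -- the key computation, for any admissible φ
  have key : ∀ φ : ℝ → E3, MemLp φ 2 μ →
      rinner n (∫ σ in (0:ℝ)..s', cross (φ σ) (P s' - P σ)) + c = 0 →
      ∫ σ, Ex σ * rinner (φ σ) (wbar σ) ∂μ = l * c := by
    intro φ hφ hcon
    have hφ1 : Integrable φ μ :=
      memLp_one_iff_integrable.mp (hφ.mono_exponent (by norm_num))
    have haesm : AEStronglyMeasurable (fun σ => cross (φ σ) (P s' - P σ)) μ :=
      SPM.cont_cross.comp_aestronglyMeasurable
        (hφ.aestronglyMeasurable.prodMk hv_meas.aestronglyMeasurable)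
    have hint : Integrable (fun σ => cross (φ σ) (P s' - P σ)) μ := by
      refine ((hφ1.norm.const_mul (C + C))).mono' haesm ?_
      rw [hμdef]
      filter_upwards [ae_restrict_mem measurableSet_Icc] with σ hσ
      calc ‖cross (φ σ) (P s' - P σ)‖ ≤ ‖φ σ‖ * ‖P s' - P σ‖ := SPM.norm_cross_le _ _
        _ ≤ ‖φ σ‖ * (C + C) := mul_le_mul_of_nonneg_left (hvb σ hσ) (norm_nonneg _)
        _ = (C + C) * ‖φ σ‖ := mul_comm _ _
    have h1 : rinner n (∫ σ in (0:ℝ)..s', cross (φ σ) (P s' - P σ)) =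
        ∫ σ, rinner n (cross (φ σ) (P s' - P σ)) ∂μ := by
      rw [hIIE]
      exact (integral_inner (𝕜 := ℝ) hint n).symm
    have h2 : (fun σ => rinner n (cross (φ σ) (P s' - P σ))) =
        fun σ => -(rinner (φ σ) (g σ)) := by
      funext σ; rw [SPM.rinner_cross_left, hgdef]
    have hcon' : ∫ σ, rinner (φ σ) (g σ) ∂μ = c := by
      rw [h1, h2] at hcon
      rw [integral_neg] at hcon
      linarith
    have h3 : (fun σ => Ex σ * rinner (φ σ) (wbar σ)) =
        fun σ => l * rinner (φ σ) (g σ) := by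
      funext σ
      rw [hwdef]
      show Ex σ * rinner (φ σ) (l • (en σ • g σ)) = _
      rw [SPM.rinner_smul_right]
      have hh := hExen σ
      linear_combination l * rinner (φ σ) (g σ) * hh
    rw [h3, MeasureTheory.integral_const_mul, hcon']
  -- the constraint holds for wbar
  have hwcon : rinner n (∫ σ in (0:ℝ)..s', cross (wbar σ) (P s' - P σ)) + c = 0 := by
    have haesm : AEStronglyMeasurable (fun σ => cross (wbar σ) (P s' - P σ)) μ :=
      SPM.cont_cross.comp_aestronglyMeasurable
        (hw_meas.aestronglyMeasurable.prodMk hv_meas.aestronglyMeasurable)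
    have hint : Integrable (fun σ => cross (wbar σ) (P s' - P σ)) μ := by
      refine (integrable_const ((|l| * (M * (‖n‖ * (C + C)))) * (C + C))).mono' haesm ?_
      rw [hμdef]
      filter_upwards [ae_restrict_mem measurableSet_Icc] with σ hσ
      calc ‖cross (wbar σ) (P s' - P σ)‖ ≤ ‖wbar σ‖ * ‖P s' - P σ‖ := SPM.norm_cross_le _ _
        _ ≤ (|l| * (M * (‖n‖ * (C + C)))) * (C + C) := by
            refine mul_le_mul (hwb σ hσ) (hvb σ hσ) (norm_nonneg _) ?_
            positivity
    have h1 : rinner n (∫ σ in (0:ℝ)..s', cross (wbar σ) (P s' - P σ)) =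
        ∫ σ, rinner n (cross (wbar σ) (P s' - P σ)) ∂μ := by
      rw [hIIE]
      exact (integral_inner (𝕜 := ℝ) hint n).symm
    have h2 : (fun σ => rinner n (cross (wbar σ) (P s' - P σ))) = fun σ =>
        -(l * (en σ * (‖n‖ ^ 2 * ‖P s' - P σ‖ ^ 2 - (rinner n (P s' - P σ)) ^ 2))) := by
      funext σ
      rw [SPM.rinner_cross_left]
      show -(rinner (l • (en σ • g σ)) (g σ)) = _
      rw [SPM.rinner_smul_left]
      have : rinner (g σ) (g σ) =
          ‖n‖ ^ 2 * ‖P s' - P σ‖ ^ 2 - (rinner n (P s' - P σ)) ^ 2 := by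
        rw [← SPM.rinner_self, hgdef]
        exact SPM.normsq_cross n (P s' - P σ)
      rw [this]; ring
    rw [h1, h2, integral_neg, MeasureTheory.integral_const_mul, hIμ, hlI]
    ring
  -- value of the cost at wbar
  have hJw : ∫ σ, Ex σ * ‖wbar σ‖ ^ 2 ∂μ = l * c := by
    rw [← key wbar hwmem hwcon]
    congr 1; funext σ; rw [SPM.rinner_self]
  -- main energy decomposition for an admissible ω
  have main : ∀ ω : ℝ → E3, MemLp ω 2 μ →
      rinner n (∫ σ in (0:ℝ)..s', cross (ω σ) (P s' - P σ)) + c = 0 →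
      Integrable (fun σ => Ex σ * ‖ω σ - wbar σ‖ ^ 2) μ ∧
      ∫ σ, Ex σ * ‖ω σ - wbar σ‖ ^ 2 ∂μ = (∫ σ, Ex σ * ‖ω σ‖ ^ 2 ∂μ) - l * c := by
    intro ω hω hcon
    have hω1 : Integrable ω μ :=
      memLp_one_iff_integrable.mp (hω.mono_exponent (by norm_num))
    have hnsq : Integrable (fun σ => ‖ω σ‖ ^ 2) μ := hω.norm.integrable_sq
    have IA : Integrable (fun σ => Ex σ * ‖ω σ‖ ^ 2) μ := by
      refine (hnsq.const_mul M).mono'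
        (hEx_meas.aestronglyMeasurable.mul hnsq.aestronglyMeasurable) ?_
      rw [hμdef]
      filter_upwards [ae_restrict_mem measurableSet_Icc] with σ hσ
      have h0 : (0:ℝ) ≤ Ex σ * ‖ω σ‖ ^ 2 := by positivity
      rw [Real.norm_eq_abs, abs_of_nonneg h0]
      exact mul_le_mul_of_nonneg_right (hExle σ hσ) (by positivity)
    have hinner_aesm : AEStronglyMeasurable (fun σ => rinner (ω σ) (wbar σ)) μ := by
      have hcont : Continuous (fun p : E3 × E3 => (inner ℝ p.1 p.2 : ℝ)) := continuous_inner
      exact hcont.comp_aestronglyMeasurable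
        (hω.aestronglyMeasurable.prodMk hw_meas.aestronglyMeasurable)
    have IB : Integrable (fun σ => Ex σ * rinner (ω σ) (wbar σ)) μ := by
      refine ((hω1.norm.const_mul (M * (|l| * (M * (‖n‖ * (C + C)))))).mono'
        (hEx_meas.aestronglyMeasurable.mul hinner_aesm) ?_)
      rw [hμdef]
      filter_upwards [ae_restrict_mem measurableSet_Icc] with σ hσ
      rw [Real.norm_eq_abs, abs_mul, abs_of_pos (hExpos σ)]
      have h1 : |rinner (ω σ) (wbar σ)| ≤ ‖ω σ‖ * ‖wbar σ‖ := abs_real_inner_le_norm _ _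
      calc Ex σ * |rinner (ω σ) (wbar σ)|
          ≤ M * (‖ω σ‖ * (|l| * (M * (‖n‖ * (C + C))))) := by
            refine mul_le_mul (hExle σ hσ) (h1.trans ?_) (abs_nonneg _) hMpos.le
            exact mul_le_mul_of_nonneg_left (hwb σ hσ) (norm_nonneg _)
        _ = M * (|l| * (M * (‖n‖ * (C + C)))) * ‖ω σ‖ := by ring
    have IC : Integrable (fun σ => Ex σ * ‖wbar σ‖ ^ 2) μ := by
      refine (integrable_const (M * (|l| * (M * (‖n‖ * (C + C)))) ^ 2)).mono'
        (hEx_meas.aestronglyMeasurable.mul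
          ((hw_meas.norm.pow_const 2).aestronglyMeasurable)) ?_
      rw [hμdef]
      filter_upwards [ae_restrict_mem measurableSet_Icc] with σ hσ
      have h0 : (0:ℝ) ≤ Ex σ * ‖wbar σ‖ ^ 2 := by positivity
      rw [Real.norm_eq_abs, abs_of_nonneg h0]
      exact mul_le_mul (hExle σ hσ)
        (pow_le_pow_left₀ (norm_nonneg _) (hwb σ hσ) 2) (by positivity) hMpos.le
    have h1 := key ω hω hcon
    have hsplit : (fun σ => Ex σ * ‖ω σ - wbar σ‖ ^ 2) = fun σ =>
        Ex σ * ‖ω σ‖ ^ 2 - 2 * (Ex σ * rinner (ω σ) (wbar σ)) + Ex σ * ‖wbar σ‖ ^ 2 := by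
      funext σ
      have hns : ‖ω σ - wbar σ‖ ^ 2 =
          ‖ω σ‖ ^ 2 - 2 * rinner (ω σ) (wbar σ) + ‖wbar σ‖ ^ 2 :=
        @norm_sub_sq_real E3 _ _ (ω σ) (wbar σ)
      rw [hns]; ring
    refine ⟨by rw [hsplit]; exact (IA.sub (IB.const_mul 2)).add IC, ?_⟩
    have e1 : ∫ σ, (Ex σ * ‖ω σ‖ ^ 2 - 2 * (Ex σ * rinner (ω σ) (wbar σ))
          + Ex σ * ‖wbar σ‖ ^ 2) ∂μ
        = (∫ σ, (Ex σ * ‖ω σ‖ ^ 2 - 2 * (Ex σ * rinner (ω σ) (wbar σ))) ∂μ)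
          + ∫ σ, Ex σ * ‖wbar σ‖ ^ 2 ∂μ :=
      integral_add (IA.sub (IB.const_mul 2)) IC
    have e2 : ∫ σ, (Ex σ * ‖ω σ‖ ^ 2 - 2 * (Ex σ * rinner (ω σ) (wbar σ))) ∂μ
        = (∫ σ, Ex σ * ‖ω σ‖ ^ 2 ∂μ) - ∫ σ, 2 * (Ex σ * rinner (ω σ) (wbar σ)) ∂μ :=
      integral_sub IA (IB.const_mul 2)
    rw [hsplit, e1, e2, MeasureTheory.integral_const_mul, h1, hJw]
    ring
  refine ⟨wbar, fun σ => rfl, hl0, hwmem, hwcon, ?_, ?_⟩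
  · intro ω hω hcon
    obtain ⟨hint, heq⟩ := main ω hω hcon
    have hnn : 0 ≤ ∫ σ, Ex σ * ‖ω σ - wbar σ‖ ^ 2 ∂μ :=
      integral_nonneg fun σ => by positivity
    rw [hII, hII, hJw]
    linarith
  · intro ω hω hcon heq0
    obtain ⟨hint, heq⟩ := main ω hω hcon
    rw [hII, hII, hJw] at heq0
    have hz : ∫ σ, Ex σ * ‖ω σ - wbar σ‖ ^ 2 ∂μ = 0 := by rw [heq, heq0]; ring
    have hae := (integral_eq_zero_iff_of_nonneg_ae
      (ae_of_all μ fun σ => by positivity) hint).mp hz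
    show ω =ᵐ[μ] wbar
    filter_upwards [hae] with σ hσ
    have hEx0 : Ex σ ≠ 0 := (hExpos σ).ne'
    have hX : ‖ω σ - wbar σ‖ ^ 2 = 0 := by
      rcases mul_eq_zero.mp hσ with h | h
      · exact absurd h hEx0
      · exact h
    have hz2 : ω σ - wbar σ = 0 :=
      norm_eq_zero.mp (pow_eq_zero_iff two_ne_zero |>.mp hX)
    exact sub_eq_zero.mp hz2
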